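/- arXiv:2005.06976 — 6 statements merged into one kernel-verified Lean document; each statement's English description precedes it below -/
import Mathlib

section
/- If Σ + M is invertible, then the orthographic retraction R_X(ξ) = [U(Σ+M) + U_p] (Σ+M)^{-1} [(Σ+M)Vᵀ + V_pᵀ] satisfies the identity R_X(ξ) = X + ξ + U_p (Σ+M)^{-1} V_pᵀ, where X = U Σ Vᵀ and ξ = U M Vᵀ + U_p Vᵀ + U V_pᵀ. -/
open Matrix

lemma aux_sum {m n k : ℕ}
    (U : Matrix (Fin m) (Fin k) ℝ) (V : Matrix (Fin n) (Fin k) ℝ)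
    (Up : Matrix (Fin m) (Fin k) ℝ) (Vp : Matrix (Fin n) (Fin k) ℝ)
    (A : Matrix (Fin k) (Fin k) ℝ) (hA : IsUnit A) :
    (U * A + Up) * A⁻¹ * (A * Vᵀ + Vpᵀ) =
      U * A * Vᵀ + Up * Vᵀ + U * Vpᵀ + Up * A⁻¹ * Vpᵀ := by
  have hd := (Matrix.isUnit_iff_isUnit_det _).mp hA
  have h1 : A * A⁻¹ = 1 := Matrix.mul_nonsing_inv _ hd
  have h2 : A⁻¹ * A = 1 := Matrix.nonsing_inv_mul _ hd
  have e1 : A⁻¹ * (A * Vᵀ) = Vᵀ := by rw [← Matrix.mul_assoc, h2, Matrix.one_mul]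
  have e2 : A * (A⁻¹ * Vpᵀ) = Vpᵀ := by rw [← Matrix.mul_assoc, h1, Matrix.one_mul]
  simp only [Matrix.add_mul, Matrix.mul_add, Matrix.mul_assoc, e1, e2]
  abel

/-- If `Σ + M` is invertible, the orthographic retraction satisfies
`R_X(ξ) = X + ξ + U_p (Σ+M)⁻¹ V_pᵀ`. -/
theorem stmt_3 {m n k : ℕ} (hm : 0 < m) (hn : 0 < n) (hk : 0 < k)
    (hkm : k ≤ m) (hkn : k ≤ n)
    (U : Matrix (Fin m) (Fin k) ℝ) (V : Matrix (Fin n) (Fin k) ℝ)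
    (hU : Uᵀ * U = 1) (hV : Vᵀ * V = 1)
    (S M : Matrix (Fin k) (Fin k) ℝ)
    (Up : Matrix (Fin m) (Fin k) ℝ) (Vp : Matrix (Fin n) (Fin k) ℝ)
    (hUp : Uᵀ * Up = 0) (hVp : Vᵀ * Vp = 0)
    (hSM : IsUnit (S + M)) :
    (U * (S + M) + Up) * (S + M)⁻¹ * ((S + M) * Vᵀ + Vpᵀ) =
      U * S * Vᵀ + (U * M * Vᵀ + Up * Vᵀ + U * Vpᵀ) + Up * (S + M)⁻¹ * Vpᵀ := by
  rw [aux_sum U V Up Vp (S + M) hSM, Matrix.mul_add U S M, Matrix.add_mul]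
  abel
end

section
/- If Σ + M is invertible, then the difference R_X(ξ) − (X + ξ) = U_p (Σ+M)^{-1} V_pᵀ lies in the normal space at X: it is Frobenius-orthogonal to every matrix of the form U M' Vᵀ + U_p' Vᵀ + U V_p'ᵀ with Uᵀ U_p' = 0 and Vᵀ V_p' = 0, and equivalently satisfies P_X(U_p (Σ+M)^{-1} V_pᵀ) = 0, where P_X(Z) = U Uᵀ Z V Vᵀ + (I − U Uᵀ) Z V Vᵀ + U Uᵀ Z (I − V Vᵀ). -/
open Matrix

/-- If `Σ + M` is invertible, the difference
`R_X(ξ) − (X + ξ) = U_p (Σ+M)⁻¹ V_pᵀ` lies in the normal space at `X`: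
it is Frobenius-orthogonal to every tangent vector
`U M' Vᵀ + U_p' Vᵀ + U V_p'ᵀ`, and satisfies `P_X(U_p (Σ+M)⁻¹ V_pᵀ) = 0`. -/
theorem stmt_4 {m n k : ℕ} (hm : 0 < m) (hn : 0 < n) (hk : 0 < k)
    (hkm : k ≤ m) (hkn : k ≤ n)
    (U : Matrix (Fin m) (Fin k) ℝ) (V : Matrix (Fin n) (Fin k) ℝ)
    (hU : Uᵀ * U = 1) (hV : Vᵀ * V = 1)
    (S M : Matrix (Fin k) (Fin k) ℝ)
    (Up : Matrix (Fin m) (Fin k) ℝ) (Vp : Matrix (Fin n) (Fin k) ℝ)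
    (hUp : Uᵀ * Up = 0) (hVp : Vᵀ * Vp = 0)
    (hSM : IsUnit (S + M))
    (P : Matrix (Fin m) (Fin n) ℝ → Matrix (Fin m) (Fin n) ℝ)
    (hP : ∀ Z, P Z =
        U * Uᵀ * Z * (V * Vᵀ) + (1 - U * Uᵀ) * Z * (V * Vᵀ)
          + U * Uᵀ * Z * (1 - V * Vᵀ)) :
    (U * (S + M) + Up) * (S + M)⁻¹ * ((S + M) * Vᵀ + Vpᵀ)
        - (U * S * Vᵀ + (U * M * Vᵀ + Up * Vᵀ + U * Vpᵀ)) =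
      Up * (S + M)⁻¹ * Vpᵀ ∧
    (∀ (M' : Matrix (Fin k) (Fin k) ℝ) (Up' : Matrix (Fin m) (Fin k) ℝ)
        (Vp' : Matrix (Fin n) (Fin k) ℝ), Uᵀ * Up' = 0 → Vᵀ * Vp' = 0 →
        Matrix.trace ((U * M' * Vᵀ + Up' * Vᵀ + U * Vp'ᵀ)ᵀ
          * (Up * (S + M)⁻¹ * Vpᵀ)) = 0) ∧
    P (Up * (S + M)⁻¹ * Vpᵀ) = 0 := by
  have hdet : IsUnit (S + M).det := (Matrix.isUnit_iff_isUnit_det _).mp hSM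
  have h1 : (S + M) * (S + M)⁻¹ = 1 := Matrix.mul_nonsing_inv _ hdet
  have h2 : (S + M)⁻¹ * (S + M) = 1 := Matrix.nonsing_inv_mul _ hdet
  have c1 : ∀ X : Matrix (Fin k) (Fin n) ℝ, (S + M) * ((S + M)⁻¹ * X) = X := by
    intro X; rw [← Matrix.mul_assoc, h1, Matrix.one_mul]
  have c2 : ∀ X : Matrix (Fin k) (Fin n) ℝ, (S + M)⁻¹ * ((S + M) * X) = X := by
    intro X; rw [← Matrix.mul_assoc, h2, Matrix.one_mul]
  have hVpV : Vpᵀ * V = 0 := by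
    have := congrArg Matrix.transpose hVp
    simpa [Matrix.transpose_mul] using this
  refine ⟨?_, ?_, ?_⟩
  · have key : ∀ A : Matrix (Fin k) (Fin k) ℝ, A * A⁻¹ = 1 → A⁻¹ * A = 1 →
        (U * A + Up) * A⁻¹ * (A * Vᵀ + Vpᵀ)
          = U * A * Vᵀ + U * Vpᵀ + Up * Vᵀ + Up * (A⁻¹ * Vpᵀ) := by
      intro A hA1 hA2
      have d1 : ∀ X : Matrix (Fin k) (Fin n) ℝ, A * (A⁻¹ * X) = X := by
        intro X; rw [← Matrix.mul_assoc, hA1, Matrix.one_mul]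
      have d2 : ∀ X : Matrix (Fin k) (Fin n) ℝ, A⁻¹ * (A * X) = X := by
        intro X; rw [← Matrix.mul_assoc, hA2, Matrix.one_mul]
      simp only [Matrix.add_mul, Matrix.mul_add, Matrix.mul_assoc, d1, d2]
      abel
    rw [key _ h1 h2, Matrix.mul_add U S M, Matrix.add_mul (U*S) (U*M) Vᵀ,
      Matrix.mul_assoc Up]
    abel
  · intro M' Up' Vp' hUp' hVp'
    have zU : ∀ X : Matrix (Fin k) (Fin n) ℝ, Uᵀ * (Up * X) = 0 := by
      intro X; rw [← Matrix.mul_assoc, hUp, Matrix.zero_mul]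
    simp only [Matrix.transpose_add, Matrix.transpose_mul, Matrix.transpose_transpose,
      Matrix.add_mul, Matrix.mul_assoc, zU, Matrix.mul_zero, Matrix.zero_mul,
      Matrix.trace_add, add_zero, Matrix.trace_zero, zero_add]
    rw [← Matrix.mul_assoc V, Matrix.trace_mul_comm]
    simp only [Matrix.mul_assoc]
    rw [← Matrix.mul_assoc Vpᵀ, hVpV]
    simp
  · rw [hP]
    have hUZ : Uᵀ * (Up * ((S + M)⁻¹ * Vpᵀ)) = 0 := by
      rw [← Matrix.mul_assoc, hUp, Matrix.zero_mul]
    have hZV : Up * (S + M)⁻¹ * Vpᵀ * (V * Vᵀ) = 0 := by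
      rw [Matrix.mul_assoc (Up * (S+M)⁻¹), ← Matrix.mul_assoc Vpᵀ, hVpV,
        Matrix.zero_mul, Matrix.mul_zero]
    have e1 : U * Uᵀ * (Up * (S + M)⁻¹ * Vpᵀ) = 0 := by
      rw [Matrix.mul_assoc U, Matrix.mul_assoc Up, hUZ, Matrix.mul_zero]
    rw [Matrix.sub_mul, Matrix.mul_sub, Matrix.sub_mul, Matrix.one_mul,
      Matrix.mul_one, hZV, e1]
    simp
end

section
/- If Σ + M is invertible, then the matrix R_X(ξ) = [U(Σ+M) + U_p] (Σ+M)^{-1} [(Σ+M)Vᵀ + V_pᵀ] has rank exactly k; in particular, the left factor U(Σ+M) + U_p ∈ ℝ^{m×k} and the right factor (Σ+M)Vᵀ + V_pᵀ ∈ ℝ^{k×n} have full rank k (e.g., because (U(Σ+M)+U_p)ᵀ(U(Σ+M)+U_p) = (Σ+M)ᵀ(Σ+M) + U_pᵀU_p is positive definite). -/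
open Matrix

/-- If `N` is invertible then `Nᵀ * N` is positive definite. -/
lemma posDef_transpose_mul_self_of_isUnit {k : ℕ} (N : Matrix (Fin k) (Fin k) ℝ)
    (h : IsUnit N) : (Nᵀ * N).PosDef := by
  refine Matrix.PosDef.of_dotProduct_mulVec_pos (Matrix.isHermitian_conjTranspose_mul_self N) fun x hx => ?_
  have hNx : N *ᵥ x ≠ 0 := by
    intro h0
    apply hx
    have := congrArg (fun y => N⁻¹ *ᵥ y) h0
    simpa [Matrix.mulVec_mulVec, Matrix.nonsing_inv_mul N ((Matrix.isUnit_iff_isUnit_det N).mp h),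
      Matrix.one_mulVec] using this
  have key : (star x) ⬝ᵥ ((Nᵀ * N) *ᵥ x) = (N *ᵥ x) ⬝ᵥ (N *ᵥ x) := by
    rw [← Matrix.mulVec_mulVec, Matrix.dotProduct_mulVec, Matrix.vecMul_transpose]
    simp
  rw [key]
  have hnn : 0 ≤ (N *ᵥ x) ⬝ᵥ (N *ᵥ x) :=
    Finset.sum_nonneg fun i _ => mul_self_nonneg _
  rcases lt_or_eq_of_le hnn with h' | h'
  · exact h'
  · exact absurd (dotProduct_self_eq_zero.mp h'.symm) hNx

/-- Gram matrix identity for the left factor. -/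
lemma gram_left {m k : ℕ} (U Up : Matrix (Fin m) (Fin k) ℝ) (N : Matrix (Fin k) (Fin k) ℝ)
    (hU : Uᵀ * U = 1) (hUp : Uᵀ * Up = 0) :
    (U * N + Up)ᵀ * (U * N + Up) = Nᵀ * N + Upᵀ * Up := by
  have hUp' : Upᵀ * U = 0 := by
    have := congrArg Matrix.transpose hUp
    simpa [Matrix.transpose_mul] using this
  have e1 : Nᵀ * Uᵀ * U = Nᵀ := by rw [Matrix.mul_assoc, hU, Matrix.mul_one]
  have e2 : Nᵀ * Uᵀ * Up = 0 := by rw [Matrix.mul_assoc, hUp, Matrix.mul_zero]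
  simp [Matrix.transpose_add, Matrix.transpose_mul, Matrix.add_mul, Matrix.mul_add,
    hUp', ← Matrix.mul_assoc, e1, e2]

/-- If `Σ + M` is invertible, then `R_X(ξ)` has rank exactly `k`;
in particular the left factor `U(Σ+M)+U_p` and right factor `(Σ+M)Vᵀ+V_pᵀ`
have full rank `k`, e.g. because the Gram matrix
`(U(Σ+M)+U_p)ᵀ(U(Σ+M)+U_p) = (Σ+M)ᵀ(Σ+M) + U_pᵀU_p` is positive definite. -/
theorem stmt_5 {m n k : ℕ} (hm : 0 < m) (hn : 0 < n) (hk : 0 < k)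
    (hkm : k ≤ m) (hkn : k ≤ n)
    (U : Matrix (Fin m) (Fin k) ℝ) (V : Matrix (Fin n) (Fin k) ℝ)
    (hU : Uᵀ * U = 1) (hV : Vᵀ * V = 1)
    (S M : Matrix (Fin k) (Fin k) ℝ)
    (Up : Matrix (Fin m) (Fin k) ℝ) (Vp : Matrix (Fin n) (Fin k) ℝ)
    (hUp : Uᵀ * Up = 0) (hVp : Vᵀ * Vp = 0)
    (hSM : IsUnit (S + M)) :
    Matrix.rank ((U * (S + M) + Up) * (S + M)⁻¹ * ((S + M) * Vᵀ + Vpᵀ)) = k ∧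
    Matrix.rank (U * (S + M) + Up) = k ∧
    Matrix.rank ((S + M) * Vᵀ + Vpᵀ) = k ∧
    (U * (S + M) + Up)ᵀ * (U * (S + M) + Up) = (S + M)ᵀ * (S + M) + Upᵀ * Up ∧
    ((U * (S + M) + Up)ᵀ * (U * (S + M) + Up)).PosDef := by
  set N := S + M with hN
  set A := U * N + Up with hA
  set B := N * Vᵀ + Vpᵀ with hB
  -- Gram identity for A
  have hGramA : Aᵀ * A = Nᵀ * N + Upᵀ * Up := gram_left U Up N hU hUp
  -- positive definiteness of Aᵀ A
  have hPD : (Aᵀ * A).PosDef := by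
    rw [hGramA]
    exact (posDef_transpose_mul_self_of_isUnit N hSM).add_posSemidef
      (Matrix.posSemidef_conjTranspose_mul_self Up)
  -- rank of A
  have hrankA : A.rank = k := by
    have h1 : (Aᵀ * A).rank = A.rank := Matrix.rank_transpose_mul_self A
    have h2 : (Aᵀ * A).rank = k := by
      rw [Matrix.rank_of_isUnit _ hPD.isUnit]
      simp
    omega
  -- rank of B via B * Bᵀ
  have hGramB : B * Bᵀ = N * Nᵀ + Vpᵀ * Vp := by
    have : Bᵀ = V * Nᵀ + Vp := by
      simp [hB, Matrix.transpose_add, Matrix.transpose_mul]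
    rw [this]
    have hVp' : Vpᵀ * V = 0 := by
      have := congrArg Matrix.transpose hVp
      simpa [Matrix.transpose_mul] using this
    have e1 : N * Vᵀ * V = N := by rw [Matrix.mul_assoc, hV, Matrix.mul_one]
    have e2 : N * Vᵀ * Vp = 0 := by rw [Matrix.mul_assoc, hVp, Matrix.mul_zero]
    simp [hB, Matrix.add_mul, Matrix.mul_add, hVp', ← Matrix.mul_assoc, e1, e2]
  have hPDB : (B * Bᵀ).PosDef := by
    rw [hGramB]
    have : (N * Nᵀ).PosDef := by
      have := posDef_transpose_mul_self_of_isUnit Nᵀ (by simpa using hSM.map (transposeRingEquiv (Fin k) ℝ))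
      simpa using this
    exact this.add_posSemidef (Matrix.posSemidef_conjTranspose_mul_self Vp)
  have hrankB : B.rank = k := by
    have h1 : (B * Bᵀ).rank = B.rank := Matrix.rank_self_mul_transpose B
    have h2 : (B * Bᵀ).rank = k := by
      rw [Matrix.rank_of_isUnit _ hPDB.isUnit]
      simp
    omega
  -- rank of the product
  have hNinv : IsUnit N⁻¹ := (Matrix.isUnit_iff_isUnit_det _).mpr
    (Matrix.isUnit_nonsing_inv_det _ ((Matrix.isUnit_iff_isUnit_det _).mp hSM))
  have hAtAunit : IsUnit (Aᵀ * A) := hPD.isUnit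
  have hBBtunit : IsUnit (B * Bᵀ) := hPDB.isUnit
  have hrankP : (A * N⁻¹ * B).rank = k := by
    apply le_antisymm
    · calc (A * N⁻¹ * B).rank ≤ (A * N⁻¹).rank := Matrix.rank_mul_le_left _ _
        _ ≤ N⁻¹.rank := Matrix.rank_mul_le_right _ _
        _ ≤ k := by simpa using Matrix.rank_le_card_width N⁻¹
    · have key : (Aᵀ * A)⁻¹ * Aᵀ * (A * N⁻¹ * B) * (Bᵀ * (B * Bᵀ)⁻¹) = N⁻¹ := by
        have e1 : (Aᵀ * A)⁻¹ * Aᵀ * (A * N⁻¹ * B) * (Bᵀ * (B * Bᵀ)⁻¹)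
            = (Aᵀ * A)⁻¹ * (Aᵀ * A) * N⁻¹ * ((B * Bᵀ) * (B * Bᵀ)⁻¹) := by
          simp only [Matrix.mul_assoc]
        rw [e1, Matrix.nonsing_inv_mul _ ((Matrix.isUnit_iff_isUnit_det _).mp hAtAunit),
          Matrix.mul_nonsing_inv _ ((Matrix.isUnit_iff_isUnit_det _).mp hBBtunit)]
        simp
      have : N⁻¹.rank ≤ (A * N⁻¹ * B).rank := by
        calc N⁻¹.rank = ((Aᵀ * A)⁻¹ * Aᵀ * (A * N⁻¹ * B) * (Bᵀ * (B * Bᵀ)⁻¹)).rank := by rw [key]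
          _ ≤ ((Aᵀ * A)⁻¹ * Aᵀ * (A * N⁻¹ * B)).rank := Matrix.rank_mul_le_left _ _
          _ ≤ (A * N⁻¹ * B).rank := Matrix.rank_mul_le_right _ _
      have hNi : N⁻¹.rank = k := by
        rw [Matrix.rank_of_isUnit _ hNinv]; simp
      omega
  exact ⟨hrankP, hrankA, hrankB, hGramA, hPD⟩
end

section
/- If Σ + M is invertible, then the orthographic retraction is inverted by the tangent-space projection: P_X(R_X(ξ)) − X = ξ, where P_X(Z) = U Uᵀ Z V Vᵀ + (I − U Uᵀ) Z V Vᵀ + U Uᵀ Z (I − V Vᵀ) and R_X(ξ) = [U(Σ+M) + U_p] (Σ+M)^{-1} [(Σ+M)Vᵀ + V_pᵀ]. In other words, the map Y ↦ P_X(Y) − X is a left inverse of R_X on tangent vectors with invertible Σ + M. -/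
open Matrix

/-- If `Σ + M` is invertible, the orthographic retraction is
inverted by the tangent-space projection: `P_X(R_X(ξ)) − X = ξ`. -/
theorem stmt_6 {m n k : ℕ} (hm : 0 < m) (hn : 0 < n) (hk : 0 < k)
    (hkm : k ≤ m) (hkn : k ≤ n)
    (U : Matrix (Fin m) (Fin k) ℝ) (V : Matrix (Fin n) (Fin k) ℝ)
    (hU : Uᵀ * U = 1) (hV : Vᵀ * V = 1)
    (S M : Matrix (Fin k) (Fin k) ℝ)
    (Up : Matrix (Fin m) (Fin k) ℝ) (Vp : Matrix (Fin n) (Fin k) ℝ)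
    (hUp : Uᵀ * Up = 0) (hVp : Vᵀ * Vp = 0)
    (hSM : IsUnit (S + M))
    (P : Matrix (Fin m) (Fin n) ℝ → Matrix (Fin m) (Fin n) ℝ)
    (hP : ∀ Z, P Z =
        U * Uᵀ * Z * (V * Vᵀ) + (1 - U * Uᵀ) * Z * (V * Vᵀ)
          + U * Uᵀ * Z * (1 - V * Vᵀ)) :
    P ((U * (S + M) + Up) * (S + M)⁻¹ * ((S + M) * Vᵀ + Vpᵀ)) - U * S * Vᵀ =
      U * M * Vᵀ + Up * Vᵀ + U * Vpᵀ := by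
  have hdet : IsUnit (S + M).det := (Matrix.isUnit_iff_isUnit_det _).mp hSM
  have hA : (S + M) * (S + M)⁻¹ = 1 := Matrix.mul_nonsing_inv _ hdet
  have hA' : (S + M)⁻¹ * (S + M) = 1 := Matrix.nonsing_inv_mul _ hdet
  have hUpU : Upᵀ * U = 0 := by
    simpa [Matrix.transpose_mul] using congrArg Matrix.transpose hUp
  have hVpV : Vpᵀ * V = 0 := by
    simpa [Matrix.transpose_mul] using congrArg Matrix.transpose hVp
  have e1 : ∀ j (X : Matrix (Fin k) (Fin j) ℝ), Uᵀ * (U * X) = X := fun j X => by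
    rw [← Matrix.mul_assoc, hU, Matrix.one_mul]
  have e2 : ∀ j (X : Matrix (Fin k) (Fin j) ℝ), Vᵀ * (V * X) = X := fun j X => by
    rw [← Matrix.mul_assoc, hV, Matrix.one_mul]
  have e3 : ∀ j (X : Matrix (Fin k) (Fin j) ℝ), Uᵀ * (Up * X) = 0 := fun j X => by
    rw [← Matrix.mul_assoc, hUp, Matrix.zero_mul]
  have e4 : ∀ j (X : Matrix (Fin k) (Fin j) ℝ), Vᵀ * (Vp * X) = 0 := fun j X => by
    rw [← Matrix.mul_assoc, hVp, Matrix.zero_mul]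
  have e5 : ∀ j (X : Matrix (Fin k) (Fin j) ℝ), Upᵀ * (U * X) = 0 := fun j X => by
    rw [← Matrix.mul_assoc, hUpU, Matrix.zero_mul]
  have e6 : ∀ j (X : Matrix (Fin k) (Fin j) ℝ), Vpᵀ * (V * X) = 0 := fun j X => by
    rw [← Matrix.mul_assoc, hVpV, Matrix.zero_mul]
  have e7 : ∀ j (X : Matrix (Fin k) (Fin j) ℝ), (S + M) * ((S + M)⁻¹ * X) = X := fun j X => by
    rw [← Matrix.mul_assoc, hA, Matrix.one_mul]
  have e8 : ∀ j (X : Matrix (Fin k) (Fin j) ℝ), (S + M)⁻¹ * ((S + M) * X) = X := fun j X => by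
    rw [← Matrix.mul_assoc, hA', Matrix.one_mul]
  rw [hP]
  set A := S + M with hAdef
  simp only [Matrix.add_mul, Matrix.mul_add, Matrix.sub_mul, Matrix.mul_sub,
    Matrix.one_mul, Matrix.mul_one, Matrix.mul_assoc, e1, e2, e3, e4, e5, e6, e7, e8,
    hU, hV, hUp, hVp, hUpU, hVpV, hA, hA', Matrix.mul_zero, Matrix.zero_mul,
    add_zero, zero_add, sub_zero, zero_sub]
  rw [hAdef]
  simp only [Matrix.mul_add, Matrix.add_mul]
  abel
end

section
/- The curve c(t) = R_X(tξ) = [U(Σ+tM) + tU_p] (Σ+tM)^{-1} [(Σ+tM)Vᵀ + tV_pᵀ], defined for all t in a neighborhood of 0 (where Σ+tM is invertible because Σ is invertible), satisfies the retraction axioms to first order: c(0) = X and the derivative of c at t = 0 equals ξ = U M Vᵀ + U_p Vᵀ + U V_pᵀ. -/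
open Matrix

attribute [local instance] Matrix.frobeniusNormedAddCommGroup Matrix.frobeniusNormedSpace
attribute [local instance] Matrix.frobeniusNormedRing

/-- With `Σ` invertible, the orthographic retraction curve
`c(t) = R_X(tξ)` is defined for all `t` in a neighborhood of `0`
(where `Σ + tM` is invertible) and satisfies the retraction axioms to first
order: `c(0) = X` and `c'(0) = ξ`. -/
theorem stmt_8 {m n k : ℕ} (hm : 0 < m) (hn : 0 < n) (hk : 0 < k)
    (hkm : k ≤ m) (hkn : k ≤ n)
    (U : Matrix (Fin m) (Fin k) ℝ) (V : Matrix (Fin n) (Fin k) ℝ)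
    (hU : Uᵀ * U = 1) (hV : Vᵀ * V = 1)
    (S M : Matrix (Fin k) (Fin k) ℝ) (hS : IsUnit S)
    (Up : Matrix (Fin m) (Fin k) ℝ) (Vp : Matrix (Fin n) (Fin k) ℝ)
    (hUp : Uᵀ * Up = 0) (hVp : Vᵀ * Vp = 0)
    (c : ℝ → Matrix (Fin m) (Fin n) ℝ)
    (hc : ∀ t : ℝ, c t =
      (U * (S + t • M) + t • Up) * (S + t • M)⁻¹ * ((S + t • M) * Vᵀ + t • Vpᵀ)) :
    (∃ ε > (0 : ℝ), ∀ t : ℝ, |t| < ε → IsUnit (S + t • M)) ∧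
    c 0 = U * S * Vᵀ ∧
    HasDerivAt c (U * M * Vᵀ + Up * Vᵀ + U * Vpᵀ) 0 := by
  have hA : Continuous fun t : ℝ => S + t • M :=
    continuous_const.add (continuous_id.smul continuous_const)
  have h0 : IsUnit (S + (0:ℝ) • M) := by simpa using hS
  have hev : ∀ᶠ t : ℝ in nhds 0, IsUnit (S + t • M) :=
    hA.continuousAt.eventually_mem (Units.isOpen.mem_nhds h0)
  obtain ⟨ε, hε, hball⟩ := Metric.eventually_nhds_iff.mp hev
  -- key identity
  have key : ∀ t : ℝ, IsUnit (S + t • M) →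
      c t = U * S * Vᵀ + t • (U * M * Vᵀ + Up * Vᵀ + U * Vpᵀ)
        + (t * t) • (Up * (S + t • M)⁻¹ * Vpᵀ) := by
    intro t ht
    have hd : IsUnit (S + t • M).det := (Matrix.isUnit_iff_isUnit_det _).mp ht
    have h1 : (S + t • M) * (S + t • M)⁻¹ = 1 := Matrix.mul_nonsing_inv _ hd
    have h2 : (S + t • M)⁻¹ * (S + t • M) = 1 := Matrix.nonsing_inv_mul _ hd
    rw [hc t]
    set A := S + t • M with hAdef
    have e1 : (U * A + t • Up) * A⁻¹ = U + t • (Up * A⁻¹) := by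
      rw [Matrix.add_mul, Matrix.mul_assoc, h1, Matrix.mul_one, Matrix.smul_mul]
    have hcanc1 : ∀ X : Matrix (Fin k) (Fin n) ℝ, A * (A⁻¹ * X) = X := by
      intro X; rw [← Matrix.mul_assoc, h1, Matrix.one_mul]
    have hcanc2 : ∀ X : Matrix (Fin k) (Fin n) ℝ, A⁻¹ * (A * X) = X := by
      intro X; rw [← Matrix.mul_assoc, h2, Matrix.one_mul]
    rw [e1]
    simp only [Matrix.add_mul, Matrix.mul_add, Matrix.smul_mul, Matrix.mul_smul,
      Matrix.mul_assoc, hcanc1, hcanc2]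
    rw [hAdef]
    simp only [Matrix.add_mul, Matrix.mul_add, Matrix.smul_mul, Matrix.mul_smul,
      Matrix.mul_assoc]
    module
  -- part 2
  have hc0 : c 0 = U * S * Vᵀ := by
    have := key 0 h0
    simpa using this
  refine ⟨⟨ε, hε, fun t ht => hball (by simpa [Real.dist_eq] using ht)⟩, hc0, ?_⟩
  -- derivative via slope
  refine hasDerivAt_iff_tendsto_slope.2 ?_
  have hcont : ContinuousAt (fun t : ℝ => Up * (S + t • M)⁻¹ * Vpᵀ) 0 := by
    obtain ⟨u, hu⟩ := h0
    have hiu : ContinuousAt Ring.inverse (S + (0:ℝ) • M) :=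
      hu ▸ NormedRing.inverse_continuousAt u
    have hinv : ContinuousAt (fun t : ℝ => (S + t • M)⁻¹) 0 := by
      simp only [Matrix.nonsing_inv_eq_ringInverse]
      exact ContinuousAt.comp (g := Ring.inverse) (f := fun t : ℝ => S + t • M)
        (x := (0:ℝ)) hiu hA.continuousAt
    have hL : Continuous (fun X : Matrix (Fin k) (Fin k) ℝ => Up * X * Vpᵀ) :=
      (continuous_const.matrix_mul continuous_id).matrix_mul continuous_const
    exact hL.continuousAt.comp hinv
  have hlim : Filter.Tendsto
      (fun t : ℝ => (U * M * Vᵀ + Up * Vᵀ + U * Vpᵀ)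
        + t • (Up * (S + t • M)⁻¹ * Vpᵀ)) (nhdsWithin 0 {(0:ℝ)}ᶜ)
      (nhds (U * M * Vᵀ + Up * Vᵀ + U * Vpᵀ)) := by
    have : Filter.Tendsto (fun t : ℝ => t • (Up * (S + t • M)⁻¹ * Vpᵀ))
        (nhds 0) (nhds 0) := by
      have := (continuousAt_id.smul hcont : ContinuousAt
        (fun t : ℝ => t • (Up * (S + t • M)⁻¹ * Vpᵀ)) 0)
      have h : Filter.Tendsto (fun t : ℝ => t • (Up * (S + t • M)⁻¹ * Vpᵀ)) (nhds 0)
          (nhds ((0:ℝ) • (Up * (S + (0:ℝ) • M)⁻¹ * Vpᵀ))) := this.tendsto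
      simpa only [zero_smul] using h
    simpa using (tendsto_const_nhds.add (this.mono_left nhdsWithin_le_nhds))
  refine hlim.congr' ?_
  filter_upwards [self_mem_nhdsWithin,
    nhdsWithin_le_nhds (hev : ∀ᶠ t : ℝ in nhds 0, IsUnit (S + t • M))] with t ht hu
  have htne : t ≠ 0 := ht
  rw [slope_def_module, key t hu, hc0]
  rw [sub_zero]
  match_scalars <;> field_simp <;> ring
end

section
/- For every t such that Σ + tM is invertible, the derivative of the retraction curve admits the rank-3k factorization d/dt R_X(tξ) = G Hᵀ, where G ∈ ℝ^{m×3k} has the three column blocks G₁ = −(U + tU_p(Σ+tM)^{-1}) M (Σ+tM)^{-1}, G₂ = U + tU_p(Σ+tM)^{-1}, G₃ = U_p + UM, and H ∈ ℝ^{n×3k} has the three column blocks H₁ = V(Σ+tM)ᵀ + tV_p, H₂ = VMᵀ + V_p, H₃ = V + tV_p(Σ+tM)^{-T}; that is, G₁H₁ᵀ + G₂H₂ᵀ + G₃H₃ᵀ equals the expression (U(Σ+tM)+tU_p)(Σ+tM)^{-1}(MVᵀ+V_pᵀ) − (U(Σ+tM)+tU_p)(Σ+tM)^{-1} M (Σ+tM)^{-1}((Σ+tM)Vᵀ+tV_pᵀ)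 + (U_p+UM)(Σ+tM)^{-1}((Σ+tM)Vᵀ+tV_pᵀ). -/
open Matrix

/-- For every `t` with `Σ + tM` invertible, the derivative of the
retraction curve admits the rank-`3k` factorization `G Hᵀ` with the three
column blocks `G₁, G₂, G₃` and `H₁, H₂, H₃`: that is,
`G₁H₁ᵀ + G₂H₂ᵀ + G₃H₃ᵀ` equals the derivative expression. -/
theorem stmt_10 {m n k : ℕ} (hm : 0 < m) (hn : 0 < n) (hk : 0 < k)
    (U : Matrix (Fin m) (Fin k) ℝ) (V : Matrix (Fin n) (Fin k) ℝ)
    (S M : Matrix (Fin k) (Fin k) ℝ)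
    (Up : Matrix (Fin m) (Fin k) ℝ) (Vp : Matrix (Fin n) (Fin k) ℝ)
    (t : ℝ) (ht : IsUnit (S + t • M))
    (G₁ G₂ G₃ : Matrix (Fin m) (Fin k) ℝ)
    (H₁ H₂ H₃ : Matrix (Fin n) (Fin k) ℝ)
    (hG₁ : G₁ = -((U + t • (Up * (S + t • M)⁻¹)) * M * (S + t • M)⁻¹))
    (hG₂ : G₂ = U + t • (Up * (S + t • M)⁻¹))
    (hG₃ : G₃ = Up + U * M)
    (hH₁ : H₁ = V * (S + t • M)ᵀ + t • Vp)
    (hH₂ : H₂ = V * Mᵀ + Vp)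
    (hH₃ : H₃ = V + t • (Vp * ((S + t • M)⁻¹)ᵀ)) :
    G₁ * H₁ᵀ + G₂ * H₂ᵀ + G₃ * H₃ᵀ =
      (U * (S + t • M) + t • Up) * (S + t • M)⁻¹ * (M * Vᵀ + Vpᵀ)
        - (U * (S + t • M) + t • Up) * (S + t • M)⁻¹ * M * (S + t • M)⁻¹
            * ((S + t • M) * Vᵀ + t • Vpᵀ)
        + (Up + U * M) * (S + t • M)⁻¹ * ((S + t • M) * Vᵀ + t • Vpᵀ) := by

  subst hG₁ hG₂ hG₃ hH₁ hH₂ hH₃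
  set A := S + t • M with hAdef
  have hA : IsUnit A.det := (isUnit_iff_isUnit_det _).mp ht
  have h1 : A * A⁻¹ = 1 := mul_nonsing_inv A hA
  have h2 : A⁻¹ * A = 1 := nonsing_inv_mul A hA
  have e1 : (U * A + t • Up) * A⁻¹ = U + t • (Up * A⁻¹) := by
    rw [Matrix.add_mul, Matrix.mul_assoc, h1, Matrix.mul_one, Matrix.smul_mul]
  have e2 : A⁻¹ * (A * Vᵀ + t • Vpᵀ) = Vᵀ + t • (A⁻¹ * Vpᵀ) := by
    rw [Matrix.mul_add, ← Matrix.mul_assoc, h2, Matrix.one_mul, Matrix.mul_smul]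
  have eH3 : (V + t • (Vp * (A⁻¹)ᵀ))ᵀ = Vᵀ + t • (A⁻¹ * Vpᵀ) := by
    simp [transpose_add, transpose_smul, transpose_mul]
  have eH1 : (V * Aᵀ + t • Vp)ᵀ = A * Vᵀ + t • Vpᵀ := by
    simp [transpose_add, transpose_smul, transpose_mul]
  have eH2 : (V * Mᵀ + Vp)ᵀ = M * Vᵀ + Vpᵀ := by
    simp [transpose_add, transpose_mul]
  rw [eH1, eH2, eH3]
  rw [show (U * A + t • Up) * A⁻¹ * (M * Vᵀ + Vpᵀ)
      = (U + t • (Up * A⁻¹)) * (M * Vᵀ + Vpᵀ) by rw [e1]]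
  rw [show (U * A + t • Up) * A⁻¹ * M * A⁻¹ * (A * Vᵀ + t • Vpᵀ)
      = (U + t • (Up * A⁻¹)) * M * A⁻¹ * (A * Vᵀ + t • Vpᵀ) by rw [e1]]
  rw [show (Up + U * M) * A⁻¹ * (A * Vᵀ + t • Vpᵀ)
      = (Up + U * M) * (Vᵀ + t • (A⁻¹ * Vpᵀ)) by rw [Matrix.mul_assoc, e2]]
  rw [Matrix.neg_mul, sub_eq_add_neg]
  abel
end
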